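/- Let R be a finite principal left ideal ring with respectful ordering <, B an ordered basis of R^n, and P a left multiplicative property with P(0) = true. Then the lexicode C(<, B, P) produced by the greedy algorithm is maximal with respect to inclusion among all left submodules C of R^n such that P(x) holds for all x ∈ C. -/

import Mathlib

open Classical in
/-- The submodule `V_i = R{b_1, …, b_i}` generated by the first `i` basis vectors. -/
noncomputable def Vlevel {R : Type*} [Ring R] {n : ℕ}
    (b : Module.Basis (Fin n) R (Fin n → R)) (i : ℕ) : Submodule R (Fin n → R) :=
  Submodule.span R (⇑b '' {j : Fin n | (j : ℕ) < i})

open Classical in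
/-- The level of a vector: the least `i` with `x ∈ V_i`, computed from the highest
index of a nonzero coordinate with respect to the basis `b`. -/
noncomputable def lvl {R : Type*} [Ring R] {n : ℕ}
    (b : Module.Basis (Fin n) R (Fin n → R)) (x : Fin n → R) : ℕ :=
  Finset.univ.sup fun j : Fin n => if b.repr x j ≠ 0 then (j : ℕ) + 1 else 0

/-- The lexicographic ordering on `Rⁿ` induced by a total order `L` on `R` and the
ordered basis `b`: first compare levels, then compare coefficient vectors
lexicographically from the highest index down. -/
def lexLt {R : Type*} [Ring R] {n : ℕ} (L : LinearOrder R)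
    (b : Module.Basis (Fin n) R (Fin n → R)) (x y : Fin n → R) : Prop :=
  lvl b x < lvl b y ∨
    (lvl b x = lvl b y ∧ ∃ k : Fin n, L.lt (b.repr x k) (b.repr y k) ∧
      ∀ j : Fin n, k < j → b.repr x j = b.repr y j)

/-- A total order `L` on `R` is respectful if whenever `Rx ⊋ Ry` (both nonzero),
some unit multiple `αx` of `x` precedes every unit multiple `uy` of `y`. -/
def RespectfulOrder {R : Type*} [Ring R] (L : LinearOrder R) : Prop :=
  ∀ x y : R, x ≠ 0 → y ≠ 0 → Ideal.span {y} < Ideal.span {x} →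
    ∃ α : Rˣ, ∀ u : Rˣ, L.lt ((α : R) * x) ((u : R) * y)

/-- Admissibility of a candidate vector `x` at a stage with current code `C`:
`P(γx + c)` holds for every generator `γ ∈ Γ` and every `c ∈ C`. -/
def Admissible {R : Type*} [Ring R] {n : ℕ} (P : (Fin n → R) → Bool) (Γ : Set R)
    (C : Submodule R (Fin n → R)) (x : Fin n → R) : Prop :=
  ∀ γ ∈ Γ, ∀ c ∈ C, P (γ • x + c) = true

/-- A run of the greedy lexicode algorithm: `C 0 = 0`, and at each step
`i = 1, …, n` either the lexicographically smallest admissible vector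
`a i ∈ V_i \ V_{i-1}` is selected and `C i = R·(a i) + C (i-1)`, or no vector of
`V_i \ V_{i-1}` is admissible and `C i = C (i-1)`. -/
def GreedyRun {R : Type*} [Ring R] {n : ℕ} (L : LinearOrder R)
    (b : Module.Basis (Fin n) R (Fin n → R)) (P : (Fin n → R) → Bool) (Γ : Set R)
    (C : ℕ → Submodule R (Fin n → R)) (a : ℕ → (Fin n → R)) (sel : ℕ → Prop) : Prop :=
  C 0 = ⊥ ∧
  ∀ i : ℕ, 1 ≤ i → i ≤ n →
    ((sel i ∧ a i ∈ Vlevel b i ∧ a i ∉ Vlevel b (i - 1) ∧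
        Admissible P Γ (C (i - 1)) (a i) ∧
        (∀ x, x ∈ Vlevel b i → x ∉ Vlevel b (i - 1) →
          Admissible P Γ (C (i - 1)) x → x = a i ∨ lexLt L b (a i) x) ∧
        C i = Submodule.span R {a i} ⊔ C (i - 1))
      ∨ (¬ sel i ∧
          (∀ x, x ∈ Vlevel b i → x ∉ Vlevel b (i - 1) →
            ¬ Admissible P Γ (C (i - 1)) x) ∧
          C i = C (i - 1)))

section Helpers
variable {R : Type*} [Ring R] {n : ℕ} (b : Module.Basis (Fin n) R (Fin n → R))

lemma mem_Vlevel_iff {x : Fin n → R} {i : ℕ} :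
    x ∈ Vlevel b i ↔ ∀ j : Fin n, i ≤ (j : ℕ) → b.repr x j = 0 := by
  rw [Vlevel, Module.Basis.mem_span_image]
  constructor
  · intro h j hj
    by_contra hne
    have h2 := h (Finsupp.mem_support_iff.2 hne)
    simp only [Set.mem_setOf_eq] at h2
    omega
  · intro h j hj
    simp only [Finset.mem_coe, Finsupp.mem_support_iff] at hj
    simp only [Set.mem_setOf_eq]
    by_contra hlt
    exact hj (h j (by omega))

lemma lvl_le_iff {x : Fin n → R} {i : ℕ} :
    lvl b x ≤ i ↔ ∀ j : Fin n, i ≤ (j : ℕ) → b.repr x j = 0 := by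
  rw [lvl, Finset.sup_le_iff]
  constructor
  · intro h j hj
    have h2 := h j (Finset.mem_univ j)
    by_contra hne
    rw [if_pos hne] at h2
    omega
  · intro h j _
    by_cases hne : b.repr x j ≠ 0
    · rw [if_pos hne]
      by_contra hlt
      exact hne (h j (by omega))
    · rw [if_neg hne]
      omega

lemma mem_Vlevel_iff_lvl {x : Fin n → R} {i : ℕ} :
    x ∈ Vlevel b i ↔ lvl b x ≤ i := by
  rw [mem_Vlevel_iff, lvl_le_iff]

lemma lvl_le_n (x : Fin n → R) : lvl b x ≤ n := by
  rw [lvl_le_iff]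
  intro j hj
  exact absurd hj (Nat.not_le.2 j.isLt)

lemma one_le_lvl {x : Fin n → R} (hx : x ≠ 0) : 1 ≤ lvl b x := by
  by_contra h
  apply hx
  have h0 : ∀ j : Fin n, b.repr x j = 0 := fun j => (lvl_le_iff (i := 0) b).1 (by omega) j (Nat.zero_le _)
  have : b.repr x = 0 := Finsupp.ext fun j => h0 j
  simpa using congrArg b.repr.symm this

lemma leading_ne_zero {x : Fin n → R} {i : ℕ} (h1 : 1 ≤ i) (hn : i ≤ n)
    (hVi : x ∈ Vlevel b i) (hVi1 : x ∉ Vlevel b (i - 1)) :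
    b.repr x ⟨i - 1, by omega⟩ ≠ 0 := by
  intro h0
  apply hVi1
  rw [mem_Vlevel_iff] at hVi ⊢
  intro j hj
  rcases Nat.eq_or_lt_of_le hj with heq | hlt
  · have : j = ⟨i - 1, by omega⟩ := Fin.ext heq.symm
    rw [this]; exact h0
  · exact hVi j (by omega)

lemma lvl_eq_of_mem {x : Fin n → R} {i : ℕ} (h1 : 1 ≤ i)
    (hVi : x ∈ Vlevel b i) (hVi1 : x ∉ Vlevel b (i - 1)) : lvl b x = i := by
  rw [mem_Vlevel_iff_lvl] at hVi hVi1
  omega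

lemma lexLt_irrefl (L : LinearOrder R) (x : Fin n → R) : ¬ lexLt L b x x := by
  rintro (h | ⟨-, k, hk, -⟩)
  · omega
  · exact @lt_irrefl R L.toPartialOrder.toPreorder _ hk

lemma lexLt_trans (L : LinearOrder R) {x y z : Fin n → R}
    (h1 : lexLt L b x y) (h2 : lexLt L b y z) : lexLt L b x z := by
  rcases h1 with h1 | ⟨e1, k1, hk1, ha1⟩
  · rcases h2 with h2 | ⟨e2, -⟩
    · exact Or.inl (by omega)
    · exact Or.inl (by omega)
  · rcases h2 with h2 | ⟨e2, k2, hk2, ha2⟩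
    · exact Or.inl (by omega)
    · refine Or.inr ⟨e1.trans e2, ?_⟩
      rcases lt_trichotomy k1 k2 with hlt | heq | hgt
      · exact ⟨k2, by rw [ha1 k2 hlt]; exact hk2, fun j hj => (ha1 j (hlt.trans hj)).trans (ha2 j hj)⟩
      · subst heq
        exact ⟨k1, @lt_trans R L.toPartialOrder.toPreorder _ _ _ hk1 hk2,
          fun j hj => (ha1 j hj).trans (ha2 j hj)⟩
      · exact ⟨k1, by rw [← ha2 k1 hgt]; exact hk1, fun j hj => (ha1 j hj).trans (ha2 j (hgt.trans hj))⟩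

end Helpers

/-- Theorem: if `P` is left multiplicative with `P(0) = true`, then the lexicode
`C(<, B, P) = C n` produced by the greedy algorithm over a finite principal left
ideal ring with a respectful ordering is maximal with respect to inclusion among all
left submodules of `Rⁿ` all of whose elements satisfy `P`. -/
theorem greedy_lexicode_maximal {R : Type*} [Ring R] [Fintype R] {n : ℕ}
    (hPLIR : ∀ I : Ideal R, ∃ g : R, I = Ideal.span {g})
    (L : LinearOrder R) (hL : RespectfulOrder L)
    (b : Module.Basis (Fin n) R (Fin n → R))
    (P : (Fin n → R) → Bool)
    (hP : ∀ (u : Rˣ) (x : Fin n → R), P ((u : R) • x) = P x)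
    (hP0 : P 0 = true)
    (Γ : Set R)
    (hΓ : ∀ r : R, r ≠ 0 → ∃ γ ∈ Γ, Ideal.span {r} = Ideal.span {γ})
    (C : ℕ → Submodule R (Fin n → R)) (a : ℕ → (Fin n → R)) (sel : ℕ → Prop)
    (hrun : GreedyRun L b P Γ C a sel) :
    ∀ D : Submodule R (Fin n → R), (∀ x ∈ D, P x = true) → C n ≤ D → D = C n := by
  intro D hD hCD
  refine le_antisymm ?_ hCD
  by_contra hns
  obtain ⟨x0, hx0D, hx0C⟩ := SetLike.not_le_iff_exists.1 hns
  -- a well-founded strict order on the finite type `Fin n → R`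
  haveI : IsTrans (Fin n → R) (lexLt L b) := ⟨fun _ _ _ => lexLt_trans b L⟩
  haveI : IsIrrefl (Fin n → R) (lexLt L b) := ⟨lexLt_irrefl b L⟩
  obtain ⟨x, ⟨hxD, hxC⟩, hminx⟩ :=
    (Finite.wellFounded_of_trans_of_irrefl (lexLt L b)).has_min
      {y | y ∈ D ∧ y ∉ C n} ⟨x0, hx0D, hx0C⟩
  -- monotonicity of the chain `C`
  have hmono : ∀ k, k ≤ n → ∀ j, j ≤ k → C j ≤ C k := by
    intro k
    induction k with
    | zero => intro _ j hj; interval_cases j; exact le_rfl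
    | succ m ih =>
      intro hm j hj
      rcases Nat.eq_or_lt_of_le hj with rfl | hlt
      · exact le_rfl
      · have h1 : C m ≤ C (m + 1) := by
          rcases hrun.2 (m + 1) (by omega) (by omega) with ⟨-, -, -, -, -, hC⟩ | ⟨-, -, hC⟩
          · rw [hC]; simpa using le_sup_right
          · rw [hC]; simp
        exact (ih (by omega) j (by omega)).trans h1
  -- basic facts about the minimal element x
  have hx0 : x ≠ 0 := fun h => hxC (h ▸ (C n).zero_mem)
  set i := lvl b x with hi
  have hi1 : 1 ≤ i := one_le_lvl b hx0
  have hin : i ≤ n := lvl_le_n b x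
  have hxVi : x ∈ Vlevel b i := (mem_Vlevel_iff_lvl b).2 le_rfl
  have hxVi1 : x ∉ Vlevel b (i - 1) := fun h => by
    have := (mem_Vlevel_iff_lvl b).1 h; omega
  have hCn_le_D : ∀ {c}, c ∈ C (i - 1) → c ∈ D := fun hc =>
    hCD (hmono n le_rfl (i - 1) (by omega) hc)
  -- any element of D is admissible w.r.t. C (i-1)
  have hadmD : ∀ z : Fin n → R, z ∈ D → Admissible P Γ (C (i - 1)) z := by
    intro z hz γ _ c hc
    exact hD _ (D.add_mem (D.smul_mem γ hz) (hCn_le_D hc))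
  -- the step i of the run must be a selection step
  rcases hrun.2 i hi1 hin with ⟨-, haVi, haVi1, -, hminsel, hCi⟩ | ⟨-, hno, -⟩
  swap
  · exact hno x hxVi hxVi1 (hadmD x hxD)
  have haiCn : a i ∈ C n := by
    have : a i ∈ C i := by
      rw [hCi]
      exact Submodule.mem_sup_left (Submodule.mem_span_singleton_self (a i))
    exact hmono n le_rfl i hin this
  have haiD : a i ∈ D := hCD haiCn
  -- leading coefficients
  set k : Fin n := ⟨i - 1, by omega⟩ with hk
  have hkval : (k : ℕ) = i - 1 := rfl
  set β := b.repr x k with hβdef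
  set α := b.repr (a i) k with hαdef
  have hβ : β ≠ 0 := leading_ne_zero b hi1 hin hxVi hxVi1
  have hα : α ≠ 0 := leading_ne_zero b hi1 hin haVi haVi1
  have hxrepr : ∀ j : Fin n, i ≤ (j : ℕ) → b.repr x j = 0 := (mem_Vlevel_iff b).1 hxVi
  have harepr : ∀ j : Fin n, i ≤ (j : ℕ) → b.repr (a i) j = 0 := (mem_Vlevel_iff b).1 haVi
  -- Key claim: β ∈ R α
  have hkey : ∃ r : R, r * α = β := by
    by_contra hcase
    push_neg at hcase
    obtain ⟨δ, hδ⟩ := hPLIR (Ideal.span {α, β})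
    have hαδ : α ∈ Ideal.span {δ} := hδ ▸ Ideal.subset_span (by simp)
    have hβδ : β ∈ Ideal.span {δ} := hδ ▸ Ideal.subset_span (by simp)
    obtain ⟨s, hs⟩ := Submodule.mem_span_singleton.1 hαδ
    have hδ0 : δ ≠ 0 := by
      rintro rfl
      exact hα (by simpa using hs.symm)
    have hδmem : δ ∈ Ideal.span ({α, β} : Set R) := by
      rw [hδ]; exact Submodule.mem_span_singleton_self δ
    obtain ⟨p, q, hpq⟩ := Submodule.mem_span_pair.1 hδmem
    rw [smul_eq_mul, smul_eq_mul] at hpq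
    have hlt : Ideal.span {α} < Ideal.span {δ} := by
      refine lt_of_le_of_ne ?_ ?_
      · rw [← hδ]
        exact Ideal.span_mono (Set.singleton_subset_iff.2 (by simp))
      · intro heq
        obtain ⟨r, hr⟩ := Submodule.mem_span_singleton.1 (heq ▸ hβδ)
        exact hcase r hr
    obtain ⟨ε, hε⟩ := hL δ α hδ0 hα hlt
    have hεδα : L.lt ((ε : R) * δ) α := by simpa using hε 1
    -- the competitor w
    set z : Fin n → R := p • a i + q • x with hz
    set w : Fin n → R := (ε : R) • z with hww
    have hwD : w ∈ D := D.smul_mem _ (D.add_mem (D.smul_mem p haiD) (D.smul_mem q hxD))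
    have hwVi : w ∈ Vlevel b i :=
      (Vlevel b i).smul_mem _ ((Vlevel b i).add_mem
        ((Vlevel b i).smul_mem p haVi) ((Vlevel b i).smul_mem q hxVi))
    have hwreprk : b.repr w k = (ε : R) * δ := by
      rw [hww, hz]
      simp only [map_smul, map_add, Finsupp.smul_apply, Finsupp.add_apply, smul_eq_mul]
      rw [← hαdef, ← hβdef, ← hpq]
    have hwrepr : ∀ j : Fin n, i ≤ (j : ℕ) → b.repr w j = 0 := by
      intro j hj
      rw [hww, hz]
      simp only [map_smul, map_add, Finsupp.smul_apply, Finsupp.add_apply, smul_eq_mul]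
      rw [hxrepr j hj, harepr j hj]
      simp
    have hεδ0 : (ε : R) * δ ≠ 0 := by
      intro h0
      apply hδ0
      have := congrArg (fun t => ((ε⁻¹ : Rˣ) : R) * t) h0
      simpa [← mul_assoc] using this
    have hwVi1 : w ∉ Vlevel b (i - 1) := by
      intro hmem
      exact hεδ0 (hwreprk ▸ (mem_Vlevel_iff b).1 hmem k (by omega))
    have hless : lexLt L b w (a i) := by
      refine Or.inr ⟨?_, k, ?_, ?_⟩
      · rw [lvl_eq_of_mem b hi1 hwVi hwVi1, lvl_eq_of_mem b hi1 haVi haVi1]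
      · rw [hwreprk, ← hαdef]; exact hεδα
      · intro j hj
        have hij : i ≤ (j : ℕ) := by
          have : (k : ℕ) < (j : ℕ) := hj
          omega
        rw [hwrepr j hij, harepr j hij]
    rcases hminsel w hwVi hwVi1 (hadmD w hwD) with heq | hgt
    · rw [heq] at hless; exact lexLt_irrefl b L (a i) hless
    · exact lexLt_irrefl b L (a i) (lexLt_trans b L hgt hless)
  -- Reduction: produce a smaller element of D \ C n
  obtain ⟨r, hr⟩ := hkey
  set y : Fin n → R := x - r • a i with hy
  have hyD : y ∈ D := D.sub_mem hxD (D.smul_mem r haiD)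
  have hyC : y ∉ C n := by
    intro hmem
    apply hxC
    have : x = y + r • a i := by rw [hy]; abel
    rw [this]
    exact (C n).add_mem hmem ((C n).smul_mem r haiCn)
  have hyV : y ∈ Vlevel b (i - 1) := by
    rw [mem_Vlevel_iff]
    intro j hj
    rw [hy]
    simp only [map_sub, map_smul, Finsupp.sub_apply, Finsupp.smul_apply, smul_eq_mul]
    rcases Nat.eq_or_lt_of_le hj with heq | hlt
    · have : j = k := Fin.ext heq.symm
      rw [this, ← hβdef, ← hαdef, hr]
      simp
    · rw [hxrepr j (by omega), harepr j (by omega)]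
      simp
  have : lexLt L b y x := by
    left
    have := (mem_Vlevel_iff_lvl b).1 hyV
    omega
  exact hminx y ⟨hyD, hyC⟩ this
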